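/- Let a > 2, λ > 0 and b > 0 be real numbers. Then the integral over the plane of the path-loss function weighted by the inhomogeneous density factor equals ∫_{x ∈ ℝ², ‖x‖ ≥ b} ‖x‖^{−a} (1 − exp(−π λ ‖x‖²)) dx = 2π b^{2−a}/(a−2) − π (πλ)^{a/2−1} ∫_{πλb²}^{∞} t^{−a/2} e^{−t} dt. -/

import Mathlib

open MeasureTheory Real

open Set Filter

lemma pow_rpow_aux {a lam x : ℝ} (hlam : 0 < lam) (hx : 0 < x) :
    (π * lam * x ^ 2) ^ (-(a/2)) = (π * lam) ^ (-(a/2)) * x ^ (-a) := by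
  have hpl : (0:ℝ) < π * lam := mul_pos Real.pi_pos hlam
  rw [Real.mul_rpow hpl.le (by positivity)]
  congr 1
  rw [← Real.rpow_natCast x 2, ← Real.rpow_mul hx.le]
  congr 1; ring

lemma integrable_rpow_aux {a b : ℝ} (ha : 2 < a) (hb : 0 < b) :
    IntegrableOn (fun y : ℝ => y ^ (1 - a)) (Ioi b) :=
  integrableOn_Ioi_rpow_of_lt (by linarith) hb

lemma integral_rpow_aux {a b : ℝ} (ha : 2 < a) (hb : 0 < b) :
    ∫ y in Ioi b, y ^ (1 - a) = b ^ (2 - a) / (a - 2) := by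
  rw [integral_Ioi_rpow_of_lt (by linarith) hb]
  rw [show (1:ℝ) - a + 1 = 2 - a by ring,
    div_eq_div_iff (show (2:ℝ) - a ≠ 0 by linarith) (show a - 2 ≠ 0 by linarith)]
  ring

lemma integrable_g_aux {a c : ℝ} (ha : 2 < a) (hc : 0 < c) :
    IntegrableOn (fun t : ℝ => t ^ (-(a/2)) * Real.exp (-t)) (Ioi c) := by
  refine Integrable.mono (integrableOn_Ioi_rpow_of_lt (show -(a/2) < -1 by linarith) hc) ?_ ?_
  · refine ContinuousOn.aestronglyMeasurable ?_ measurableSet_Ioi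
    exact (continuousOn_id.rpow_const fun t ht => Or.inl (ne_of_gt (hc.trans ht))).mul
      (Real.continuous_exp.comp continuous_neg).continuousOn
  · filter_upwards [ae_restrict_mem measurableSet_Ioi] with t ht
    have ht0 : (0:ℝ) < t := hc.trans ht
    rw [Real.norm_eq_abs, Real.norm_eq_abs, abs_of_nonneg (by positivity), abs_of_nonneg (by positivity)]
    nlinarith [Real.exp_nonneg (-t), Real.exp_le_one_iff.2 (neg_nonpos.2 ht0.le) , Real.rpow_nonneg ht0.le (-(a/2))]

lemma integrable_exp_aux {a lam b : ℝ} (ha : 2 < a) (hlam : 0 < lam) (hb : 0 < b) :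
    IntegrableOn (fun y : ℝ => y ^ (1 - a) * Real.exp (-(π * lam * y ^ 2))) (Ioi b) := by
  refine Integrable.mono (integrable_rpow_aux ha hb) ?_ ?_
  · refine ContinuousOn.aestronglyMeasurable ?_ measurableSet_Ioi
    exact (continuousOn_id.rpow_const fun t ht => Or.inl (ne_of_gt (hb.trans ht))).mul
      (Real.continuous_exp.comp (continuous_neg.comp
        ((continuous_const.mul (continuous_pow 2))))).continuousOn
  · filter_upwards [ae_restrict_mem measurableSet_Ioi] with y hy
    have hy0 : (0:ℝ) < y := hb.trans hy
    rw [Real.norm_eq_abs, Real.norm_eq_abs, abs_of_nonneg (by positivity),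
      abs_of_nonneg (by positivity)]
    nlinarith [Real.exp_nonneg (-(π * lam * y ^ 2)),
      Real.exp_le_one_iff.2 (neg_nonpos.2 (by positivity : (0:ℝ) ≤ π * lam * y ^ 2)),
      Real.rpow_nonneg hy0.le (1 - a)]

lemma subst_aux {a lam b : ℝ} (ha : 2 < a) (hlam : 0 < lam) (hb : 0 < b) :
    ∫ y in Ioi b, y ^ (1 - a) * Real.exp (-(π * lam * y ^ 2)) =
      (π * lam) ^ (a / 2 - 1) / 2 *
        ∫ t in Ioi (π * lam * b ^ 2), t ^ (-(a / 2)) * Real.exp (-t) := by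
  have hpl : (0:ℝ) < π * lam := mul_pos Real.pi_pos hlam
  set g : ℝ → ℝ := fun t => t ^ (-(a / 2)) * Real.exp (-t) with hg
  set f : ℝ → ℝ := fun x => π * lam * x ^ 2 with hf
  have hgcont : ContinuousOn g (Ioi 0) :=
    (continuousOn_id.rpow_const fun t ht => Or.inl (ne_of_gt ht)).mul
      (Real.continuous_exp.comp continuous_neg).continuousOn
  have himg1 : f '' Ioi b ⊆ Ioi 0 := by
    rintro _ ⟨x, hx, rfl⟩
    have : (0:ℝ) < x := hb.trans hx
    exact mul_pos hpl (pow_pos this 2)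
  have himg2 : f '' Ici b ⊆ Ici (π * lam * b ^ 2) := by
    rintro _ ⟨x, hx, rfl⟩
    have : b ^ 2 ≤ x ^ 2 := by nlinarith [hx.out]
    exact mul_le_mul_of_nonneg_left this hpl.le
  have key : ∫ x in Ioi b, (g ∘ f) x * (2 * (π * lam) * x) =
      ∫ u in Ioi (π * lam * b ^ 2), g u := by
    have := integral_comp_mul_deriv_Ioi (f := f) (f' := fun x => 2 * (π * lam) * x) (g := g)
      (a := b)
      ((continuous_const.mul (continuous_pow 2)).continuousOn)
      (Tendsto.const_mul_atTop hpl (tendsto_pow_atTop two_ne_zero))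
      (fun x _ => by
        have h := ((hasDerivAt_pow 2 x).const_mul (π * lam))
        have h2 : π * lam * (↑2 * x ^ (2 - 1)) = 2 * (π * lam) * x := by push_cast; ring
        exact (h2 ▸ h).hasDerivWithinAt)
      (hgcont.mono himg1)
      (((integrableOn_Ici_iff_integrableOn_Ioi enorm_ne_top).2
        (integrable_g_aux ha (mul_pos hpl (pow_pos hb 2)))).mono_set himg2)
      ?_
    · simpa using this
    · rw [integrableOn_Ici_iff_integrableOn_Ioi]
      refine Integrable.mono (((integrable_rpow_aux ha hb).const_mul
        (2 * (π * lam) * (π * lam) ^ (-(a / 2)))) : IntegrableOn _ _ _) ?_ ?_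
      · refine ContinuousOn.aestronglyMeasurable ?_ measurableSet_Ioi
        refine ContinuousOn.mul (hgcont.comp
          ((continuous_const.mul (continuous_pow 2)).continuousOn) ?_) ?_
        · intro x hx
          have : (0:ℝ) < x := hb.trans hx
          exact mul_pos hpl (pow_pos this 2)
        · exact (continuous_const.mul continuous_id).continuousOn
      · filter_upwards [ae_restrict_mem measurableSet_Ioi] with x hx
        have hx0 : (0:ℝ) < x := hb.trans hx
        have hE : Real.exp (-(π * lam * x ^ 2)) ≤ 1 :=
          Real.exp_le_one_iff.2 (neg_nonpos.2 (by positivity))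
        have hx1 : x ^ (1 - a) = x ^ (-a) * x := by
          rw [show (1:ℝ) - a = -a + 1 by ring, Real.rpow_add_one hx0.ne']
        simp only [Function.comp, hg, hf]
        rw [Real.norm_eq_abs, Real.norm_eq_abs, pow_rpow_aux hlam hx0,
          abs_of_nonneg (by positivity), abs_of_nonneg (by positivity), hx1]
        nlinarith [mul_le_of_le_one_right (show (0:ℝ) ≤ 2 * (π * lam) *
          (π * lam) ^ (-(a / 2)) * (x ^ (-a) * x) by positivity) hE]
  have hC1 : (π * lam) ^ (a / 2 - 1) * (π * lam) ^ (-(a / 2)) * (π * lam) = 1 := by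
    rw [← Real.rpow_add hpl, show a / 2 - 1 + -(a / 2) = -1 by ring,
      ← Real.rpow_add_one hpl.ne', neg_add_cancel, Real.rpow_zero]
  calc ∫ y in Ioi b, y ^ (1 - a) * Real.exp (-(π * lam * y ^ 2))
      = ∫ x in Ioi b, (π * lam) ^ (a / 2 - 1) / 2 * ((g ∘ f) x * (2 * (π * lam) * x)) := by
        refine setIntegral_congr_fun measurableSet_Ioi fun x hx => ?_
        have hx0 : (0:ℝ) < x := hb.trans hx
        have hx1 : x ^ (1 - a) = x ^ (-a) * x := by
          rw [show (1:ℝ) - a = -a + 1 by ring, Real.rpow_add_one hx0.ne']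
        simp only [Function.comp, hg, hf]
        rw [pow_rpow_aux hlam hx0, hx1]
        linear_combination
          (-(x ^ (-a) * x * Real.exp (-(π * lam * x ^ 2)))) * hC1
    _ = (π * lam) ^ (a / 2 - 1) / 2 * ∫ x in Ioi b, (g ∘ f) x * (2 * (π * lam) * x) :=
        integral_const_mul _ _
    _ = _ := by rw [key]

/-- Planar integral identity of Lemma 1: mean BS-to-BS interference via Campbell's formula. -/
theorem planar_pathloss_inhomogeneous_integral
    (a lam b : ℝ) (ha : 2 < a) (hlam : 0 < lam) (hb : 0 < b) :
    (∫ x in {x : EuclideanSpace ℝ (Fin 2) | b ≤ ‖x‖},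
        ‖x‖ ^ (-a) * (1 - Real.exp (-(π * lam * ‖x‖ ^ 2)))) =
      2 * π * b ^ (2 - a) / (a - 2) -
        π * (π * lam) ^ (a / 2 - 1) *
          ∫ t in Set.Ioi (π * lam * b ^ 2), t ^ (-(a / 2)) * Real.exp (-t) := by
  have hpl : (0:ℝ) < π * lam := mul_pos Real.pi_pos hlam
  set F : ℝ → ℝ := fun y => y ^ (-a) * (1 - Real.exp (-(π * lam * y ^ 2))) with hF
  have hSmeas : MeasurableSet {x : EuclideanSpace ℝ (Fin 2) | b ≤ ‖x‖} :=
    measurableSet_le measurable_const continuous_norm.measurable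
  have step1 : (∫ x in {x : EuclideanSpace ℝ (Fin 2) | b ≤ ‖x‖}, F ‖x‖) =
      ∫ x : EuclideanSpace ℝ (Fin 2), Set.indicator (Ici b) F ‖x‖ := by
    rw [← integral_indicator hSmeas]
    refine integral_congr_ae (Filter.Eventually.of_forall fun x => ?_)
    by_cases h : b ≤ ‖x‖ <;> simp [Set.indicator_apply, h, Set.mem_setOf_eq]
  have step2 := MeasureTheory.integral_fun_norm_addHaar
    (volume : Measure (EuclideanSpace ℝ (Fin 2))) (Set.indicator (Ici b) F)
  have hdim : Module.finrank ℝ (EuclideanSpace ℝ (Fin 2)) = 2 := finrank_euclideanSpace_fin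
  rw [hdim] at step2
  have hball : (volume (Metric.ball (0 : EuclideanSpace ℝ (Fin 2)) 1)).toReal = π := by
    rw [EuclideanSpace.volume_ball]
    simp only [Fintype.card_fin]
    rw [show ((2:ℕ):ℝ) / 2 + 1 = 2 by norm_num, Real.Gamma_two,
      Real.sq_sqrt Real.pi_pos.le]
    simp [Real.pi_pos.le]
  have step3 : ∫ y in Ioi (0:ℝ), y ^ (2 - 1) • Set.indicator (Ici b) F y
      = ∫ y in Ioi b, y ^ (1 - a) * (1 - Real.exp (-(π * lam * y ^ 2))) := by
    have e1 : ∀ y : ℝ, y ^ (2 - 1) • Set.indicator (Ici b) F y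
        = Set.indicator (Ici b) (fun y => y * F y) y := by
      intro y
      by_cases h : y ∈ Ici b <;> simp [Set.indicator, h]
    simp only [e1]
    rw [setIntegral_indicator measurableSet_Ici,
      Set.inter_eq_self_of_subset_right (show Ici b ⊆ Ioi 0 from fun y hy => hb.trans_le hy),
      integral_Ici_eq_integral_Ioi]
    refine setIntegral_congr_fun measurableSet_Ioi fun y hy => ?_
    have hy0 : (0:ℝ) < y := hb.trans hy
    have hy1 : y ^ (1 - a) = y ^ (-a) * y := by
      rw [show (1:ℝ) - a = -a + 1 by ring, Real.rpow_add_one hy0.ne']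
    rw [hF]; simp only []
    rw [hy1]; ring
  have step4 : ∫ y in Ioi b, y ^ (1 - a) * (1 - Real.exp (-(π * lam * y ^ 2)))
      = b ^ (2 - a) / (a - 2) - (π * lam) ^ (a / 2 - 1) / 2 *
          ∫ t in Ioi (π * lam * b ^ 2), t ^ (-(a / 2)) * Real.exp (-t) := by
    have e2 : ∀ y ∈ Ioi b, y ^ (1 - a) * (1 - Real.exp (-(π * lam * y ^ 2)))
        = y ^ (1 - a) - y ^ (1 - a) * Real.exp (-(π * lam * y ^ 2)) := fun y _ => by ring
    rw [setIntegral_congr_fun measurableSet_Ioi e2,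
      integral_sub (integrable_rpow_aux ha hb) (integrable_exp_aux ha hlam hb),
      integral_rpow_aux ha hb, subst_aux ha hlam hb]
  rw [show (∫ x in {x : EuclideanSpace ℝ (Fin 2) | b ≤ ‖x‖},
      ‖x‖ ^ (-a) * (1 - Real.exp (-(π * lam * ‖x‖ ^ 2)))) =
      ∫ x in {x : EuclideanSpace ℝ (Fin 2) | b ≤ ‖x‖}, F ‖x‖ from rfl,
    step1, step2, measureReal_def, hball, step3, step4]
  simp only [smul_eq_mul, nsmul_eq_mul, Nat.cast_ofNat]
  ring
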